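/- For 0 ≤ p ≤ 1, 0 ≤ r ≤ 1 with p + r ≤ 1 and 0 ≤ s ≤ 1, the quadratic in s given by (p + r - 1)·s² + (2 - r - p·r - r² - 2p)·s + (2r - p·r + r³) is nondecreasing in s on [0,1]. -/
import Mathlib

theorem stmt_7 (p r : ℝ) (hp0 : 0 ≤ p) (hp1 : p ≤ 1) (hr0 : 0 ≤ r) (hr1 : r ≤ 1)
    (hpr : p + r ≤ 1) :
    MonotoneOn (fun s : ℝ =>
      (p + r - 1) * s ^ 2 + (2 - r - p * r - r ^ 2 - 2 * p) * s + (2 * r - p * r + r ^ 3))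
      (Set.Icc 0 1) := by
  intro a ha b hb hab
  obtain ⟨ha0, ha1⟩ := ha
  obtain ⟨hb0, hb1⟩ := hb
  simp only
  nlinarith [mul_nonneg (sub_nonneg.2 hab) (mul_nonneg hr0 (sub_nonneg.2 hpr)),
    mul_nonneg (sub_nonneg.2 hab) (mul_nonneg (sub_nonneg.2 hb1) (sub_nonneg.2 hpr)),
    mul_nonneg (sub_nonneg.2 hab) (mul_nonneg (sub_nonneg.2 ha1) (sub_nonneg.2 hpr))]
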